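/- Let (a_i)_{i=1}^r be positive integers and let 0 ≤ s < r. Then the number of r-tuples (x_1,...,x_r) of non-negative integers satisfying sum_{i=1}^r x_i/a_i < 1 is at least (1 - sum_{i=s+1}^r 1/a_i)^{r-s} * (prod_{i=s+1}^r a_i) / (r-s)!, provided sum_{i=s+1}^r 1/a_i ≤ 1. -/

import Mathlib

/-- The solution set is finite. -/
lemma sol_finite {n : ℕ} (a : Fin n → ℕ) (ha : ∀ i, 0 < a i) (c : ℝ) :
    {x : Fin n → ℕ | ∑ i, (x i : ℝ) / (a i : ℝ) < c}.Finite := by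
  apply Set.Finite.subset (Set.Finite.pi (fun i : Fin n => Set.finite_Iio (⌈c * a i⌉₊)))
  intro x hx
  simp only [Set.mem_pi, Set.mem_univ, Set.mem_Iio, forall_true_left]
  intro i
  rw [Nat.lt_ceil]
  have h1 : (x i : ℝ) / a i < c :=
    lt_of_le_of_lt (Finset.single_le_sum (f := fun j => (x j : ℝ) / a j)
      (fun j _ => by positivity) (Finset.mem_univ i)) hx
  have hai : (0:ℝ) < a i := by exact_mod_cast ha i
  rw [div_lt_iff₀ hai] at h1
  linarith

lemma pow_sub_pow_le' {d e : ℝ} (n : ℕ) (he : 0 ≤ e) (hed : e ≤ d) :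
    d ^ (n + 1) - e ^ (n + 1) ≤ (n + 1) * d ^ n * (d - e) := by
  rw [← geom_sum₂_mul d e (n + 1)]
  have hd : 0 ≤ d := le_trans he hed
  apply mul_le_mul_of_nonneg_right _ (by linarith)
  calc ∑ i ∈ Finset.range (n + 1), d ^ i * e ^ (n + 1 - 1 - i)
      ≤ ∑ _i ∈ Finset.range (n + 1), d ^ n := by
        apply Finset.sum_le_sum
        intro i hi
        have hin : i + (n + 1 - 1 - i) = n := by
          have := Finset.mem_range.mp hi; omega
        calc d ^ i * e ^ (n + 1 - 1 - i) ≤ d ^ i * d ^ (n + 1 - 1 - i) :=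
              mul_le_mul_of_nonneg_left (pow_le_pow_left₀ he hed _) (pow_nonneg hd i)
          _ = d ^ n := by rw [← pow_add, hin]
    _ = (n + 1) * d ^ n := by
        rw [Finset.sum_const, Finset.card_range, nsmul_eq_mul]
        push_cast; ring

lemma sum_pow_ge (n : ℕ) (A : ℝ) (hA : 0 < A) :
    ∀ (m : ℕ) (d : ℝ), 0 ≤ d → d * A ≤ m →
      A * d ^ (n + 1) / (n + 1) ≤ ∑ k ∈ Finset.range m, max (d - k / A) 0 ^ n := by
  intro m
  induction m with
  | zero =>
    intro d hd hdA
    simp only [Nat.cast_zero] at hdA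
    have hd0 : d = 0 := le_antisymm (by nlinarith) hd
    subst hd0
    simp
  | succ m ih =>
    intro d hd hdA
    rw [Finset.sum_range_succ']
    set e : ℝ := max (d - 1 / A) 0 with he_def
    have he : 0 ≤ e := le_max_right _ _
    have h1A : (0:ℝ) ≤ 1 / A := by positivity
    have hed : e ≤ d := max_le (by linarith) hd
    have heA : e * A ≤ m := by
      rcases le_total (d - 1 / A) 0 with hc | hc
      · rw [he_def, max_eq_right hc]
        simp
      · rw [he_def, max_eq_left hc]
        have hAA : (d - 1 / A) * A = d * A - 1 := by field_simp
        rw [hAA]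
        push_cast at hdA ⊢
        linarith
    have hde : d - e ≤ 1 / A := by
      have : d - 1 / A ≤ e := le_max_left _ _
      linarith
    have hsum := ih e he heA
    have hterm : ∀ k ∈ Finset.range m,
        max (d - (↑(k + 1) : ℝ) / A) 0 ^ n = max (e - (k : ℝ) / A) 0 ^ n := by
      intro k _
      congr 1
      have hk : (0:ℝ) ≤ (k : ℝ) / A := by positivity
      rcases le_total (d - 1 / A) 0 with hc | hc
      · have h1 : e = 0 := max_eq_right hc
        have h2 : d - (↑(k + 1) : ℝ) / A ≤ 0 := by push_cast; rw [add_div]; linarith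
        rw [h1, max_eq_right h2, max_eq_right (by linarith : (0:ℝ) - (k:ℝ)/A ≤ 0)]
      · have h1 : e = d - 1 / A := max_eq_left hc
        rw [h1]
        congr 1
        push_cast
        ring
    rw [Finset.sum_congr rfl hterm]
    simp only [Nat.cast_zero, zero_div, sub_zero, max_eq_left hd]
    have key := pow_sub_pow_le' n he hed
    have hdn : (0:ℝ) ≤ d ^ n := pow_nonneg hd n
    have hAde : A * (d - e) ≤ 1 := by
      have := mul_le_mul_of_nonneg_left hde hA.le
      rw [mul_one_div, div_self hA.ne'] at this
      linarith
    have k2 : A * (d ^ (n+1) - e ^ (n+1)) ≤ A * ((n+1) * d ^ n * (d - e)) :=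
      mul_le_mul_of_nonneg_left key hA.le
    have k4 : ((n:ℝ)+1) * d ^ n * (A * (d - e)) ≤ ((n:ℝ)+1) * d ^ n * 1 :=
      mul_le_mul_of_nonneg_left hAde (by positivity)
    have h1 : A * d ^ (n+1) ≤ A * e ^ (n+1) + ((n:ℝ)+1) * d ^ n := by nlinarith [k2, k4]
    have hn1 : (0:ℝ) < (n:ℝ) + 1 := by positivity
    calc A * d ^ (n+1) / ((n:ℝ)+1)
        ≤ (A * e ^ (n+1) + ((n:ℝ)+1) * d ^ n) / ((n:ℝ)+1) := by
          exact (div_le_div_iff_of_pos_right hn1).mpr h1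
      _ = A * e ^ (n+1) / ((n:ℝ)+1) + d ^ n := by
          rw [add_div, mul_div_assoc, mul_div_cancel_left₀ _ hn1.ne']
      _ ≤ (∑ k ∈ Finset.range m, max (e - (k:ℝ) / A) 0 ^ n) + d ^ n := by linarith

lemma aux_count : ∀ (n : ℕ) (a : Fin n → ℕ), (∀ i, 0 < a i) → ∀ c : ℝ,
    (∑ i, ((a i : ℝ))⁻¹) < c →
    (c - ∑ i, ((a i : ℝ))⁻¹) ^ n * (∏ i, (a i : ℝ)) / (Nat.factorial n : ℝ) ≤
      (Nat.card {x : Fin n → ℕ | ∑ i, (x i : ℝ) / (a i : ℝ) < c} : ℝ) := by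
  intro n
  induction n with
  | zero =>
    intro a ha c hc
    simp only [Finset.univ_eq_empty, Finset.sum_empty, Finset.prod_empty] at hc ⊢
    have hset : {x : Fin 0 → ℕ | (0:ℝ) < c} = Set.univ := by
      ext x; simp [hc]
    rw [hset, Nat.card_univ, Nat.card_unique]
    simp [Nat.factorial]
  | succ n ih =>
    intro a ha c hc
    set a' : Fin n → ℕ := fun j => a j.castSucc with ha'def
    have ha' : ∀ j, 0 < a' j := fun j => ha _
    have hA0 : (0:ℝ) < (a (Fin.last n) : ℝ) := by exact_mod_cast ha _
    set A : ℝ := (a (Fin.last n) : ℝ) with hAdef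
    set T : ℝ := ∑ j, ((a' j : ℝ))⁻¹ with hTdef
    have hcs : ∀ j : Fin n, (a (Fin.castSucc j) : ℝ) = (a' j : ℝ) := fun _ => rfl
    have hsum : ∑ i, ((a i : ℝ))⁻¹ = T + A⁻¹ := by
      exact Fin.sum_univ_castSucc (fun i => ((a i : ℝ))⁻¹)
    set d : ℝ := c - T with hddef
    have hdA : A⁻¹ < d := by
      rw [hsum] at hc
      have hdd : d = c - T := hddef
      linarith
    have hd : 0 < d := lt_trans (inv_pos.mpr hA0) hdA
    set m : ℕ := ⌈d * A⌉₊ with hmdef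
    have hfin := sol_finite a ha c
    haveI : Finite ↥{x : Fin (n+1) → ℕ | ∑ i, (x i : ℝ) / (a i : ℝ) < c} := hfin.to_subtype
    letI : Fintype ↥{x : Fin (n+1) → ℕ | ∑ i, (x i : ℝ) / (a i : ℝ) < c} := hfin.fintype
    letI : ∀ k : ℕ, Fintype ↥{y : Fin n → ℕ | ∑ j, (y j : ℝ) / (a' j : ℝ) < c - (k:ℝ) / A} :=
      fun k => (sol_finite a' ha' (c - (k:ℝ)/A)).fintype
    have hmem : ∀ (k : Fin m) (y : ↥{y : Fin n → ℕ | ∑ j, (y j : ℝ) / (a' j : ℝ) < c - ((k:ℕ):ℝ) / A}),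
        (Fin.snoc (y : Fin n → ℕ) (k:ℕ) : Fin (n+1) → ℕ) ∈
          {x : Fin (n+1) → ℕ | ∑ i, (x i : ℝ) / (a i : ℝ) < c} := by
      intro k y
      have hy := y.2
      simp only [Set.mem_setOf_eq] at hy ⊢
      rw [Fin.sum_univ_castSucc]
      simp only [Fin.snoc_castSucc, Fin.snoc_last, hcs, ← hAdef]
      have hk : (0:ℝ) ≤ ((k:ℕ):ℝ) / A := by positivity
      linarith
    have hcount : ∑ k ∈ Finset.range m,
        (Nat.card ↥{y : Fin n → ℕ | ∑ j, (y j : ℝ) / (a' j : ℝ) < c - (k:ℝ) / A}) ≤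
        Nat.card ↥{x : Fin (n+1) → ℕ | ∑ i, (x i : ℝ) / (a i : ℝ) < c} := by
      let F : (Σ k : Fin m, ↥{y : Fin n → ℕ | ∑ j, (y j : ℝ) / (a' j : ℝ) < c - ((k:ℕ):ℝ) / A}) →
          ↥{x : Fin (n+1) → ℕ | ∑ i, (x i : ℝ) / (a i : ℝ) < c} :=
        fun p => ⟨Fin.snoc (p.2 : Fin n → ℕ) ((p.1 : ℕ)), hmem p.1 p.2⟩
      have hFinj : Function.Injective F := by
        rintro ⟨k, y⟩ ⟨k', y'⟩ hF
        have h1 : (Fin.snoc (y : Fin n → ℕ) (k:ℕ) : Fin (n+1) → ℕ) =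
            Fin.snoc (y' : Fin n → ℕ) (k':ℕ) := congrArg Subtype.val hF
        have hk : (k:ℕ) = (k':ℕ) := by
          have := congrFun h1 (Fin.last n); simpa using this
        have hkk : k = k' := Fin.ext hk
        subst hkk
        have hyy : (y : Fin n → ℕ) = (y' : Fin n → ℕ) := by
          funext j
          have := congrFun h1 j.castSucc
          simpa using this
        have hyy' : y = y' := Subtype.ext hyy
        rw [hyy']
      have hcard := Fintype.card_le_of_injective F hFinj
      rw [Fintype.card_sigma] at hcard
      calc ∑ k ∈ Finset.range m,
            (Nat.card ↥{y : Fin n → ℕ | ∑ j, (y j : ℝ) / (a' j : ℝ) < c - (k:ℝ) / A})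
          = ∑ k : Fin m,
            (Nat.card ↥{y : Fin n → ℕ | ∑ j, (y j : ℝ) / (a' j : ℝ) < c - ((k:ℕ):ℝ) / A}) :=
            (Fin.sum_univ_eq_sum_range _ m).symm
        _ = ∑ k : Fin m,
            Fintype.card ↥{y : Fin n → ℕ | ∑ j, (y j : ℝ) / (a' j : ℝ) < c - ((k:ℕ):ℝ) / A} :=
            Finset.sum_congr rfl (fun k _ => Nat.card_eq_fintype_card)
        _ ≤ Fintype.card ↥{x : Fin (n+1) → ℕ | ∑ i, (x i : ℝ) / (a i : ℝ) < c} := hcard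
        _ = Nat.card ↥{x : Fin (n+1) → ℕ | ∑ i, (x i : ℝ) / (a i : ℝ) < c} :=
            Nat.card_eq_fintype_card.symm
    have hslice : ∀ k : ℕ, k < m →
        (d - (k:ℝ)/A) ^ n * (∏ j, (a' j : ℝ)) / (Nat.factorial n : ℝ) ≤
          (Nat.card ↥{y : Fin n → ℕ | ∑ j, (y j : ℝ) / (a' j : ℝ) < c - (k:ℝ) / A} : ℝ) := by
      intro k hk
      have hklt : (k : ℝ) < d * A := Nat.lt_ceil.mp hk
      have hkA : (k:ℝ)/A < d := by rw [div_lt_iff₀ hA0]; exact hklt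
      have h2 : ∑ j, ((a' j : ℝ))⁻¹ < c - (k:ℝ)/A := by
        rw [← hTdef]
        have hdd : d = c - T := hddef
        linarith
      have hih := ih a' ha' (c - (k:ℝ)/A) h2
      have harg : c - (k:ℝ)/A - ∑ j, ((a' j : ℝ))⁻¹ = d - (k:ℝ)/A := by
        rw [← hTdef, hddef]; ring
      rw [harg] at hih
      exact hih
    have hm : d * A ≤ (m:ℝ) := Nat.le_ceil _
    have hsp := sum_pow_ge n A hA0 m d hd.le hm
    have hmax : ∀ k ∈ Finset.range m, max (d - (k:ℝ)/A) 0 ^ n = (d - (k:ℝ)/A) ^ n := by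
      intro k hk
      have h1 : (k : ℝ) < d * A := Nat.lt_ceil.mp (Finset.mem_range.mp hk)
      have h2 : (k:ℝ)/A < d := by rw [div_lt_iff₀ hA0]; exact h1
      rw [max_eq_left (by linarith)]
    rw [Finset.sum_congr rfl hmax] at hsp
    have hP' : (0:ℝ) ≤ ∏ j, (a' j : ℝ) := Finset.prod_nonneg (fun j _ => by positivity)
    have hprod : ∏ i, (a i : ℝ) = (∏ j, (a' j : ℝ)) * A := by
      exact Fin.prod_univ_castSucc (fun i => (a i : ℝ))
    have hfact0 : (0:ℝ) < (Nat.factorial n : ℝ) := by exact_mod_cast Nat.factorial_pos n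
    have hfact : (Nat.factorial (n+1) : ℝ) = ((n:ℝ)+1) * (Nat.factorial n : ℝ) := by
      rw [Nat.factorial_succ]; push_cast; ring
    have hn1 : (0:ℝ) < (n:ℝ) + 1 := by positivity
    have hdA' : (0:ℝ) ≤ d - A⁻¹ := by linarith
    calc (c - ∑ i, ((a i : ℝ))⁻¹) ^ (n+1) * (∏ i, (a i : ℝ)) / (Nat.factorial (n+1) : ℝ)
        = (d - A⁻¹) ^ (n+1) * ((∏ j, (a' j : ℝ)) * A) / (((n:ℝ)+1) * (Nat.factorial n : ℝ)) := by
          rw [hsum, hprod, hfact]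
          have : c - (T + A⁻¹) = d - A⁻¹ := by rw [hddef]; ring
          rw [this]
      _ ≤ d ^ (n+1) * ((∏ j, (a' j : ℝ)) * A) / (((n:ℝ)+1) * (Nat.factorial n : ℝ)) := by
          apply div_le_div_of_nonneg_right _ (by positivity)
          apply mul_le_mul_of_nonneg_right _ (by positivity)
          exact pow_le_pow_left₀ hdA' (by linarith [inv_pos.mpr hA0]) _
      _ = (A * d ^ (n+1) / ((n:ℝ)+1)) * ((∏ j, (a' j : ℝ)) / (Nat.factorial n : ℝ)) := by
          field_simp
      _ ≤ (∑ k ∈ Finset.range m, (d - (k:ℝ)/A) ^ n) * ((∏ j, (a' j : ℝ)) / (Nat.factorial n : ℝ)) := by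
          apply mul_le_mul_of_nonneg_right hsp (by positivity)
      _ = ∑ k ∈ Finset.range m, (d - (k:ℝ)/A) ^ n * (∏ j, (a' j : ℝ)) / (Nat.factorial n : ℝ) := by
          rw [Finset.sum_mul]
          exact Finset.sum_congr rfl (fun k _ => by rw [mul_div_assoc])
      _ ≤ ∑ k ∈ Finset.range m,
            (Nat.card ↥{y : Fin n → ℕ | ∑ j, (y j : ℝ) / (a' j : ℝ) < c - (k:ℝ) / A} : ℝ) :=
          Finset.sum_le_sum (fun k hk => hslice k (Finset.mem_range.mp hk))
      _ ≤ (Nat.card ↥{x : Fin (n+1) → ℕ | ∑ i, (x i : ℝ) / (a i : ℝ) < c} : ℝ) := by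
          rw [← Nat.cast_sum]
          exact_mod_cast hcount

/-- lower bound on the number of non-negative integer solutions to
`∑ x_i / a_i < 1`, in terms of the coordinates with index `> s`. -/
theorem stmt1 (r s : ℕ) (hs : s < r) (a : Fin r → ℕ) (ha : ∀ i, 0 < a i)
    (h : ∑ i ∈ Finset.univ.filter (fun i : Fin r => s ≤ (i : ℕ)), ((a i : ℝ))⁻¹ ≤ 1) :
    (1 - ∑ i ∈ Finset.univ.filter (fun i : Fin r => s ≤ (i : ℕ)), ((a i : ℝ))⁻¹) ^ (r - s) *
        (∏ i ∈ Finset.univ.filter (fun i : Fin r => s ≤ (i : ℕ)), (a i : ℝ)) /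
        (Nat.factorial (r - s) : ℝ) ≤
      (Nat.card {x : Fin r → ℕ | ∑ i, (x i : ℝ) / (a i : ℝ) < 1} : ℝ) := by
  rcases eq_or_lt_of_le h with heq | hlt
  · have hz : (1:ℝ) - ∑ i ∈ Finset.univ.filter (fun i : Fin r => s ≤ (i : ℕ)), ((a i : ℝ))⁻¹ = 0 := by
      rw [heq]; ring
    rw [hz, zero_pow (by omega : r - s ≠ 0), zero_mul, zero_div]
    positivity
  · -- construct the embedding from Fin (r-s)
    have hsr : ∀ j : Fin (r - s), s + (j : ℕ) < r := fun j => by have := j.isLt; omega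
    set e : Fin (r - s) → Fin r := fun j => ⟨s + (j : ℕ), hsr j⟩ with hedef
    have he : Function.Injective e := by
      intro j j' hjj
      have := congrArg Fin.val hjj
      simp only [hedef] at this
      exact Fin.ext (by omega)
    have hfe : Finset.univ.filter (fun i : Fin r => s ≤ (i : ℕ)) =
        Finset.map ⟨e, he⟩ Finset.univ := by
      ext i
      simp only [Finset.mem_filter, Finset.mem_univ, true_and, Finset.mem_map,
        Function.Embedding.coeFn_mk]
      constructor
      · intro hi
        have hii := i.isLt
        exact ⟨⟨(i : ℕ) - s, by omega⟩, Fin.ext (by simp [hedef]; omega)⟩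
      · rintro ⟨j, rfl⟩
        simp [hedef]
    have hsumf : ∀ f : Fin r → ℝ,
        ∑ i ∈ Finset.univ.filter (fun i : Fin r => s ≤ (i : ℕ)), f i =
          ∑ j : Fin (r - s), f (e j) := by
      intro f; rw [hfe, Finset.sum_map]; rfl
    have hprodf : ∏ i ∈ Finset.univ.filter (fun i : Fin r => s ≤ (i : ℕ)), (a i : ℝ) =
          ∏ j : Fin (r - s), (a (e j) : ℝ) := by
      rw [hfe, Finset.prod_map]; rfl
    set b : Fin (r - s) → ℕ := fun j => a (e j) with hbdef
    have hb : ∀ j, 0 < b j := fun j => ha _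
    have hTb : ∑ j : Fin (r - s), ((b j : ℝ))⁻¹ =
        ∑ i ∈ Finset.univ.filter (fun i : Fin r => s ≤ (i : ℕ)), ((a i : ℝ))⁻¹ :=
      (hsumf fun i => ((a i : ℝ))⁻¹).symm
    have hmain := aux_count (r - s) b hb 1 (by rw [hTb]; exact hlt)
    -- injection from b-solutions to a-solutions
    haveI : Finite ↥{x : Fin r → ℕ | ∑ i, (x i : ℝ) / (a i : ℝ) < 1} :=
      (sol_finite a ha 1).to_subtype
    have hmem : ∀ y : ↥{y : Fin (r-s) → ℕ | ∑ j, (y j : ℝ) / (b j : ℝ) < 1},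
        (fun i : Fin r => if hi : s ≤ (i : ℕ) then (y : Fin (r-s) → ℕ) ⟨(i:ℕ) - s, by have := i.isLt; omega⟩ else 0)
          ∈ {x : Fin r → ℕ | ∑ i, (x i : ℝ) / (a i : ℝ) < 1} := by
      intro y
      have hy := y.2
      simp only [Set.mem_setOf_eq] at hy ⊢
      rw [← Finset.sum_filter_add_sum_filter_not Finset.univ (fun i : Fin r => s ≤ (i : ℕ))]
      have hz2 : ∑ i ∈ Finset.univ.filter (fun i : Fin r => ¬ s ≤ (i : ℕ)),
          ((if hi : s ≤ (i : ℕ) then (y : Fin (r-s) → ℕ) ⟨(i:ℕ) - s, by have := i.isLt; omega⟩ else 0 : ℕ) : ℝ) / (a i : ℝ) = 0 := by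
        apply Finset.sum_eq_zero
        intro i hi
        rw [Finset.mem_filter] at hi
        rw [dif_neg hi.2]
        simp
      rw [hz2, add_zero, hsumf]
      have hterm : ∀ j : Fin (r - s),
          ((if hi : s ≤ ((e j : Fin r) : ℕ) then (y : Fin (r-s) → ℕ) ⟨((e j : Fin r):ℕ) - s, by have := (e j).isLt; omega⟩ else 0 : ℕ) : ℝ) / (a (e j) : ℝ)
            = ((y : Fin (r-s) → ℕ) j : ℝ) / (b j : ℝ) := by
        intro j
        have hsle : s ≤ ((e j : Fin r) : ℕ) := by simp [hedef]
        rw [dif_pos hsle]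
        have hidx : (⟨((e j : Fin r):ℕ) - s, by have := (e j).isLt; omega⟩ : Fin (r - s)) = j := by
          apply Fin.ext; simp [hedef]
        rw [hidx]
      rw [Finset.sum_congr rfl (fun j _ => hterm j)]
      exact hy
    have hinj : (Nat.card ↥{y : Fin (r-s) → ℕ | ∑ j, (y j : ℝ) / (b j : ℝ) < 1} : ℝ) ≤
        (Nat.card ↥{x : Fin r → ℕ | ∑ i, (x i : ℝ) / (a i : ℝ) < 1} : ℝ) := by
      have hcard : Nat.card ↥{y : Fin (r-s) → ℕ | ∑ j, (y j : ℝ) / (b j : ℝ) < 1} ≤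
          Nat.card ↥{x : Fin r → ℕ | ∑ i, (x i : ℝ) / (a i : ℝ) < 1} := by
        apply Nat.card_le_card_of_injective
          (fun y => (⟨_, hmem y⟩ : ↥{x : Fin r → ℕ | ∑ i, (x i : ℝ) / (a i : ℝ) < 1}))
        intro y y' hyy
        have h1 := congrArg Subtype.val hyy
        apply Subtype.ext
        funext j
        have h2 := congrFun h1 (e j)
        have hsle : s ≤ ((e j : Fin r) : ℕ) := by simp [hedef]
        simp only [dif_pos hsle] at h2
        have hidx : (⟨((e j : Fin r):ℕ) - s, by have := (e j).isLt; omega⟩ : Fin (r - s)) = j := by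
          apply Fin.ext; simp [hedef]
        rwa [hidx] at h2
      exact_mod_cast hcard
    calc (1 - ∑ i ∈ Finset.univ.filter (fun i : Fin r => s ≤ (i : ℕ)), ((a i : ℝ))⁻¹) ^ (r - s) *
        (∏ i ∈ Finset.univ.filter (fun i : Fin r => s ≤ (i : ℕ)), (a i : ℝ)) /
        (Nat.factorial (r - s) : ℝ)
        = (1 - ∑ j : Fin (r-s), ((b j : ℝ))⁻¹) ^ (r - s) * (∏ j : Fin (r-s), (b j : ℝ)) /
          (Nat.factorial (r - s) : ℝ) := by rw [hTb, hprodf]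
      _ ≤ (Nat.card ↥{y : Fin (r-s) → ℕ | ∑ j, (y j : ℝ) / (b j : ℝ) < 1} : ℝ) := hmain
      _ ≤ _ := hinj
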